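/- Let ρ̄ : G → GL₂(k̄) be continuous with trace ρ̄(Fr_v)² = (1+q_v)² q_v^{-1} det ρ̄(Fr_v) for all v outside a finite set (in the sense of a dense set of Frobenius elements), where ℓ = char k ≥ 3. Then ρ̄ is reducible and ρ̄^ss ≅ χ̄ ⊕ χ̄(1) for some character χ̄ : G → k̄^×. -/

import Mathlib

open Matrix Polynomial

section Helpers

variable {K : Type*} [Field K]

/-- The cross product (determinant) of two vectors in `K²`. -/
private def cross2 (u v : Fin 2 → K) : K := u 0 * v 1 - u 1 * v 0

private lemma ne_zero_of_comp2 {x : Fin 2 → K} (i : Fin 2) (h : x i ≠ 0) : x ≠ 0 := by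
  intro h0; exact h (by rw [h0]; rfl)

private lemma exists_smul_of_cross2_eq_zero {x y : Fin 2 → K} (hx : x ≠ 0)
    (h : cross2 y x = 0) : ∃ c : K, y = c • x := by
  have hex : ∃ i, x i ≠ 0 := by
    by_contra hc; push_neg at hc; exact hx (funext fun i => hc i)
  rw [cross2, sub_eq_zero] at h
  obtain ⟨i, hi⟩ := hex
  fin_cases i
  · have hi' : x 0 ≠ 0 := hi
    have h0 : y 0 = y 0 / x 0 * x 0 := by field_simp
    have h1 : y 1 = y 0 / x 0 * x 1 := by
      rw [div_mul_eq_mul_div, eq_div_iff hi']; linear_combination -h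
    exact ⟨y 0 / x 0, funext fun j => by fin_cases j <;> [exact h0; exact h1]⟩
  · have hi' : x 1 ≠ 0 := hi
    have h0 : y 0 = y 1 / x 1 * x 0 := by
      rw [div_mul_eq_mul_div, eq_div_iff hi']; linear_combination h
    have h1 : y 1 = y 1 / x 1 * x 1 := by field_simp
    exact ⟨y 1 / x 1, funext fun j => by fin_cases j <;> [exact h0; exact h1]⟩

private lemma charpoly_fin2 (M : Matrix (Fin 2) (Fin 2) K) :
    M.charpoly = X^2 - C M.trace * X + C M.det := by
  rw [Matrix.charpoly, Matrix.det_fin_two, Matrix.trace_fin_two, Matrix.det_fin_two]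
  simp [charmatrix_apply]
  ring

private lemma cross2_eq_zero_of_kernel {M : Matrix (Fin 2) (Fin 2) K} (hM : M ≠ 0)
    {x y : Fin 2 → K} (hx : M *ᵥ x = 0) (hy : M *ᵥ y = 0) : cross2 y x = 0 := by
  by_contra h
  apply hM
  have key : ∀ v : Fin 2 → K, M *ᵥ v = 0 := by
    intro v
    have e : cross2 y x • v = cross2 v x • y + cross2 y v • x := by
      funext i; fin_cases i <;> simp [cross2, smul_eq_mul] <;> ring
    have := congrArg (fun w => M *ᵥ w) e
    simp only [Matrix.mulVec_smul, Matrix.mulVec_add, hx, hy, smul_zero, add_zero] at this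
    exact (smul_eq_zero.mp this).resolve_left h
  ext i j
  have := congrFun (key (Pi.single j 1)) i
  simpa [Matrix.mulVec_single] using this

private lemma exists_kernel_vec2 {M : Matrix (Fin 2) (Fin 2) K} (hM : M ≠ 0)
    (hd : M.det = 0) : ∃ x : Fin 2 → K, x ≠ 0 ∧ M *ᵥ x = 0 := by
  rw [Matrix.det_fin_two] at hd
  by_cases h0 : M 0 0 = 0 ∧ M 0 1 = 0
  · have hr : M 1 0 ≠ 0 ∨ M 1 1 ≠ 0 := by
      by_contra hc; push_neg at hc
      exact hM (by ext i j; fin_cases i <;> fin_cases j <;>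
        simp [h0.1, h0.2, hc.1, hc.2])
    refine ⟨![M 1 1, -(M 1 0)], ?_, ?_⟩
    · intro hz
      rcases hr with h | h
      · exact h (by have := congrFun hz 1; simpa using (neg_eq_zero.mp (by simpa using this)))
      · exact h (by simpa using congrFun hz 0)
    · funext i; fin_cases i <;>
        simp [Matrix.mulVec, dotProduct, Fin.sum_univ_two, h0.1, h0.2] <;> ring
  · refine ⟨![M 0 1, -(M 0 0)], ?_, ?_⟩
    · intro hz
      apply h0
      constructor
      · have := congrFun hz 1; simpa using (neg_eq_zero.mp (by simpa using this))
      · simpa using congrFun hz 0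
    · funext i; fin_cases i
      · simp [Matrix.mulVec, dotProduct, Fin.sum_univ_two]
        ring
      · simp [Matrix.mulVec, dotProduct, Fin.sum_univ_two]
        linear_combination -hd

private lemma ch2 (M : Matrix (Fin 2) (Fin 2) K) :
    M * M = M.trace • M - M.det • (1 : Matrix (Fin 2) (Fin 2) K) := by
  ext i j
  fin_cases i <;> fin_cases j <;>
    simp [Matrix.mul_apply, Fin.sum_univ_two, Matrix.trace_fin_two, Matrix.det_fin_two,
      Matrix.one_apply] <;> ring

private lemma expand2 (a b : K) (N N' : Matrix (Fin 2) (Fin 2) K) :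
    (a • (1 : Matrix (Fin 2) (Fin 2) K) + N) * (b • 1 + N') =
      (a*b) • (1 : Matrix (Fin 2) (Fin 2) K) + a • N' + b • N + N * N' := by
  simp only [add_mul, mul_add, smul_mul_assoc, mul_smul_comm, one_mul, mul_one, smul_smul,
    smul_add]
  module

private lemma trace_mix (a b : K) (N N' : Matrix (Fin 2) (Fin 2) K) :
    ((a • (1 : Matrix (Fin 2) (Fin 2) K) + N) * (b • 1 + N')).trace =
      2*(a*b) + a * N'.trace + b * N.trace + (N * N').trace := by
  rw [expand2]
  simp [Matrix.trace_add, Matrix.trace_smul, Matrix.trace_one, smul_eq_mul]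
  ring

private lemma vecMulVec_mulVec2 (x φ y : Fin 2 → K) :
    Matrix.vecMulVec x φ *ᵥ y = (φ ⬝ᵥ y) • x := by
  funext i
  simp [Matrix.vecMulVec, Matrix.mulVec, dotProduct, Fin.sum_univ_two, smul_eq_mul]
  ring

private lemma trace_vecMulVec2 (x φ : Fin 2 → K) :
    (Matrix.vecMulVec x φ).trace = φ ⬝ᵥ x := by
  simp [Matrix.trace_fin_two, Matrix.vecMulVec, dotProduct, Fin.sum_univ_two]
  ring

private lemma trace_vecMulVec_conj2 (x φ : Fin 2 → K) (B C : Matrix (Fin 2) (Fin 2) K) :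
    (Matrix.vecMulVec x φ * B * Matrix.vecMulVec x φ * C).trace
      = (φ ⬝ᵥ (B *ᵥ x)) * (φ ⬝ᵥ (C *ᵥ x)) := by
  simp [Matrix.trace_fin_two, Matrix.vecMulVec, Matrix.mul_apply, Matrix.mulVec,
    dotProduct, Fin.sum_univ_two]
  ring

private lemma rank_one_decomp2 {N : Matrix (Fin 2) (Fin 2) K} (hN : N ≠ 0) (hd : N.det = 0) :
    ∃ x φ : Fin 2 → K, x ≠ 0 ∧ φ ≠ 0 ∧ N = Matrix.vecMulVec x φ := by
  by_cases h0 : N 0 = 0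
  · have h1 : N 1 ≠ 0 := by
      intro h1; exact hN (by ext i j; fin_cases i <;> simp [congrFun h0, congrFun h1])
    refine ⟨![0,1], N 1, ?_, h1, ?_⟩
    · intro hz; simpa using congrFun hz 1
    · ext i j; fin_cases i <;> simp [Matrix.vecMulVec, congrFun h0 j]
  · have hcross : cross2 (N 1) (N 0) = 0 := by
      rw [Matrix.det_fin_two] at hd
      simp only [cross2]
      linear_combination -hd
    obtain ⟨μ, hμ⟩ := exists_smul_of_cross2_eq_zero h0 hcross
    refine ⟨![1,μ], N 0, ?_, h0, ?_⟩
    · intro hz; simpa using congrFun hz 0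
    · ext i j; fin_cases i
      · simp [Matrix.vecMulVec]
      · simp [Matrix.vecMulVec, congrFun hμ j, smul_eq_mul]

private lemma cross2_eq_zero_of_dot {φ x y : Fin 2 → K} (hφ : φ ≠ 0)
    (hx : φ ⬝ᵥ x = 0) (hy : φ ⬝ᵥ y = 0) : cross2 y x = 0 := by
  have hex : ∃ i, φ i ≠ 0 := by
    by_contra hc; push_neg at hc; exact hφ (funext fun i => hc i)
  simp only [dotProduct, Fin.sum_univ_two] at hx hy
  obtain ⟨i, hi⟩ := hex
  fin_cases i
  · have hi' : φ 0 ≠ 0 := hi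
    have : φ 0 * cross2 y x = 0 := by
      simp only [cross2]; linear_combination x 1 * hy - y 1 * hx
    exact (mul_eq_zero.mp this).resolve_left hi'
  · have hi' : φ 1 ≠ 0 := hi
    have : φ 1 * cross2 y x = 0 := by
      simp only [cross2]; linear_combination y 0 * hx - x 0 * hy
    exact (mul_eq_zero.mp this).resolve_left hi'

end Helpers

/-- Let `ρ̄ : G → GL₂(k̄)` be continuous, with
`trace ρ̄(Fr_v)² = (1+q_v)² q_v⁻¹ det ρ̄(Fr_v)` for a dense set of Frobenius
elements, where `char k̄ = ℓ ≥ 3` and `ω` is the mod-`ℓ` cyclotomic character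
(`ω (Fr_v) = q_v`).  Then `ρ̄` is reducible (has a common eigenvector) and
`ρ̄^ss ≅ χ̄ ⊕ χ̄(1)` for some character `χ̄` (expressed via characteristic
polynomials, by Brauer–Nesbitt). -/
theorem stmt15 {K : Type*} [Field K] [IsAlgClosed K]
    (ℓ : ℕ) (hℓ : ℓ.Prime) (h3 : 3 ≤ ℓ) [CharP K ℓ] [TopologicalSpace K] [T2Space K]
    {G : Type*} [Group G] [TopologicalSpace G] [IsTopologicalGroup G] [CompactSpace G]
    {V : Type*} (Fr : V → G) (q : V → Kˣ)
    (ρbar : G →* GL (Fin 2) K) (ω : G →* Kˣ)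
    (hω : ∀ v : V, ω (Fr v) = q v)
    (hdense : Dense (Set.range Fr))
    (hcont : Continuous fun g : G =>
      ((ρbar g).val.trace) ^ 2 -
        (1 + (ω g : K)) ^ 2 * ((ω g : K))⁻¹ * (ρbar g).val.det)
    (htr : ∀ v : V, ((ρbar (Fr v)).val.trace) ^ 2 =
      (1 + (q v : K)) ^ 2 * ((q v : K))⁻¹ * (ρbar (Fr v)).val.det) :
    (∃ x : Fin 2 → K, x ≠ 0 ∧ ∀ g : G, ∃ c : K, (ρbar g).val.mulVec x = c • x) ∧
    ∃ χ : G →* Kˣ, ∀ g : G,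
      ((ρbar g).val).charpoly =
        (X - C ((χ g : K))) * (X - C ((χ g : K) * (ω g : K))) := by
  classical
  -- notation
  set A : G → Matrix (Fin 2) (Fin 2) K := fun g => (ρbar g).val with hA
  set t : G → K := fun g => (A g).trace with ht
  set d : G → K := fun g => (A g).det with hd
  set w : G → K := fun g => ((ω g : Kˣ) : K) with hw
  have hA_mul : ∀ g h : G, A (g * h) = A g * A h := by
    intro g h; simp [hA, _root_.map_mul]
  have hA_one : A 1 = 1 := by simp [hA]
  have hAinv : ∀ g : G, A g * A g⁻¹ = 1 := by
    intro g
    rw [← hA_mul, mul_inv_cancel, hA_one]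
  have hAinv' : ∀ g : G, A g⁻¹ * A g = 1 := by
    intro g
    rw [← hA_mul, inv_mul_cancel, hA_one]
  have hd_mul : ∀ g h : G, d (g * h) = d g * d h := by
    intro g h; simp [hd, hA_mul, Matrix.det_mul]
  have hd_ne : ∀ g : G, d g ≠ 0 := by
    intro g h0
    have h1 : d g * d g⁻¹ = 1 := by
      rw [← hd_mul]
      simp [hd, hA_one]
    rw [h0, zero_mul] at h1
    exact zero_ne_one h1
  have hw_mul : ∀ g h : G, w (g * h) = w g * w h := by
    intro g h; simp [hw, _root_.map_mul]
  have hw_ne : ∀ g : G, w g ≠ 0 := fun g => Units.ne_zero _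
  have two_ne : (2 : K) ≠ 0 := by
    have : ¬ (ℓ ∣ 2) := by
      intro hdvd
      have := Nat.le_of_dvd (by norm_num) hdvd
      omega
    have h2 : ((2 : ℕ) : K) ≠ 0 := by
      rw [Ne, CharP.cast_eq_zero_iff K ℓ 2]; exact this
    simpa using h2
  have four_ne : (4 : K) ≠ 0 := by
    have h := mul_ne_zero two_ne two_ne
    simpa [show (2:K)*2 = 4 by norm_num] using h
  -- the key identity, extended to all of G by density
  have key : ∀ g : G, t g ^ 2 * w g = (1 + w g)^2 * d g := by
    have hfun : (fun g : G =>
        ((ρbar g).val.trace) ^ 2 -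
          (1 + (ω g : K)) ^ 2 * ((ω g : K))⁻¹ * (ρbar g).val.det) = fun _ => (0 : K) := by
      apply Continuous.ext_on hdense hcont continuous_const
      rintro y ⟨v, rfl⟩
      simp only [hω v, htr v, sub_self]
    intro g
    have h0 := congrFun hfun g
    simp only [sub_eq_zero] at h0
    have : t g ^ 2 = (1 + w g)^2 * (w g)⁻¹ * d g := h0
    field_simp [hw_ne g] at this ⊢
    linear_combination this
  -- ω h = 1 implies equal eigenvalues
  have keyH : ∀ h : G, w h = 1 → t h ^ 2 = 4 * d h := by
    intro h h1
    have := key h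
    rw [h1] at this
    linear_combination this
  -- Part 1 : common eigenvector
  have part1 : ∃ x : Fin 2 → K, x ≠ 0 ∧ ∀ g : G, ∃ c : K, A g *ᵥ x = c • x := by
    by_cases hsc : ∀ h : G, w h = 1 → ∃ c : K, A h = c • 1
    · -- Case A : scalar on H, so the image commutes
      have hcomm : ∀ g g' : G, A g * A g' = A g' * A g := by
        intro g g'
        have hωc : w ((g * g') * (g' * g)⁻¹) = 1 := by
          rw [hw_mul]
          have h1 : w ((g' * g)⁻¹) = (w (g' * g))⁻¹ := by simp [hw, map_inv]
          rw [h1, hw_mul, hw_mul]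
          have e : w g * w g' * (w g' * w g)⁻¹ = (w g * (w g)⁻¹) * (w g' * (w g')⁻¹) := by
            rw [mul_inv]
            ring
          rw [e, mul_inv_cancel₀ (hw_ne g), mul_inv_cancel₀ (hw_ne g'), one_mul]
        obtain ⟨c, hc⟩ := hsc _ hωc
        have hrel : A g * A g' = c • (A g' * A g) := by
          have e : A (g * g') = A ((g * g') * (g' * g)⁻¹) * A (g' * g) := by
            rw [← hA_mul, inv_mul_cancel_right]
          rw [hc, hA_mul, smul_mul_assoc, one_mul, hA_mul] at e
          exact e
        have hc2 : c ^ 2 = 1 := by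
          have hdet := congrArg Matrix.det hrel
          rw [Matrix.det_mul, Matrix.det_smul, Matrix.det_mul, Fintype.card_fin] at hdet
          have hdd : (A g).det * (A g').det ≠ 0 := mul_ne_zero (hd_ne g) (hd_ne g')
          have h0 : (c ^ 2 - 1) * ((A g).det * (A g').det) = 0 := by linear_combination -hdet
          rcases mul_eq_zero.mp h0 with h | h
          · linear_combination h
          · exact absurd h hdd
        have hcc : c = 1 ∨ c = -1 := by
          have h0 : (c - 1) * (c + 1) = 0 := by linear_combination hc2
          rcases mul_eq_zero.mp h0 with h | h
          · exact Or.inl (by linear_combination h)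
          · exact Or.inr (by linear_combination h)
        rcases hcc with rfl | rfl
        · rw [one_smul] at hrel; exact hrel
        · exfalso
          rw [neg_smul, one_smul] at hrel
          have hrel' : A g' * A g = -(A g * A g') := by rw [hrel, neg_neg]
          have tr0 : (A g * A g').trace = 0 := by
            have h1 : (A g * A g').trace = (A g' * A g).trace := Matrix.trace_mul_comm _ _
            have h2 : (A g * A g').trace = -((A g' * A g).trace) := by
              rw [hrel, Matrix.trace_neg]
            have h3 : (2 : K) * (A g * A g').trace = 0 := by linear_combination h1 + h2
            exact (mul_eq_zero.mp h3).resolve_left two_ne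
          have trg : (A g).trace = 0 := by
            have e : A g = (A g * A g') * A g'⁻¹ := by rw [mul_assoc, hAinv g', mul_one]
            have h2 : (A g).trace = -(((A g' * A g) * A g'⁻¹).trace) := by
              conv_lhs => rw [e, hrel]
              rw [neg_mul, Matrix.trace_neg]
            have h4 : ((A g' * A g) * A g'⁻¹).trace = (A g).trace := by
              rw [Matrix.trace_mul_comm, ← mul_assoc, hAinv' g', one_mul]
            rw [h4] at h2
            have h3 : (2 : K) * (A g).trace = 0 := by linear_combination h2
            exact (mul_eq_zero.mp h3).resolve_left two_ne
          have trg' : (A g').trace = 0 := by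
            have e : A g' = (A g' * A g) * A g⁻¹ := by rw [mul_assoc, hAinv g, mul_one]
            have h2 : (A g').trace = -(((A g * A g') * A g⁻¹).trace) := by
              conv_lhs => rw [e, hrel']
              rw [neg_mul, Matrix.trace_neg]
            have h4 : ((A g * A g') * A g⁻¹).trace = (A g').trace := by
              rw [Matrix.trace_mul_comm, ← mul_assoc, hAinv' g, one_mul]
            rw [h4] at h2
            have h3 : (2 : K) * (A g').trace = 0 := by linear_combination h2
            exact (mul_eq_zero.mp h3).resolve_left two_ne
          have wg : w g = -1 := by
            have hk := key g
            rw [show t g = (A g).trace from rfl, trg] at hk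
            have h00 : (1 + w g) ^ 2 * d g = 0 := by linear_combination -hk
            have h0 : (1 + w g) ^ 2 = 0 := (mul_eq_zero.mp h00).resolve_right (hd_ne g)
            have h1 : 1 + w g = 0 := sq_eq_zero_iff.mp h0
            linear_combination h1
          have wg' : w g' = -1 := by
            have hk := key g'
            rw [show t g' = (A g').trace from rfl, trg'] at hk
            have h00 : (1 + w g') ^ 2 * d g' = 0 := by linear_combination -hk
            have h0 : (1 + w g') ^ 2 = 0 := (mul_eq_zero.mp h00).resolve_right (hd_ne g')
            have h1 : 1 + w g' = 0 := sq_eq_zero_iff.mp h0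
            linear_combination h1
          have hw1 : w (g * g') = 1 := by rw [hw_mul, wg, wg']; ring
          have hk := keyH _ hw1
          rw [show t (g * g') = (A (g * g')).trace from rfl, hA_mul, tr0] at hk
          have : d (g * g') = 0 := by
            have h4 : (4 : K) * d (g * g') = 0 := by linear_combination -hk
            exact (mul_eq_zero.mp h4).resolve_left four_ne
          exact hd_ne _ this
      by_cases hallsc : ∀ g : G, ∃ c : K, A g = c • 1
      · refine ⟨![1, 0], ne_zero_of_comp2 0 (by norm_num), fun g => ?_⟩
        obtain ⟨c, hc⟩ := hallsc g
        exact ⟨c, by rw [hc, Matrix.smul_mulVec, Matrix.one_mulVec]⟩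
      · push_neg at hallsc
        obtain ⟨g₀, hg₀⟩ := hallsc
        have hlam : ∃ lam : K, lam ^ 2 - t g₀ * lam + d g₀ = 0 := by
          obtain ⟨lam, hl⟩ := IsAlgClosed.exists_root
            (C 1 * X ^ 2 + C (-(t g₀)) * X + C (d g₀))
            (by rw [Polynomial.degree_quadratic one_ne_zero]; norm_num)
          refine ⟨lam, ?_⟩
          have := hl
          simp only [Polynomial.IsRoot, Polynomial.eval_add, Polynomial.eval_mul,
            Polynomial.eval_pow, Polynomial.eval_C, Polynomial.eval_X] at this
          linear_combination this
        obtain ⟨lam, hlam⟩ := hlam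
        have htg : t g₀ = (A g₀) 0 0 + (A g₀) 1 1 := Matrix.trace_fin_two _
        have hdg : d g₀ = (A g₀) 0 0 * (A g₀) 1 1 - (A g₀) 0 1 * (A g₀) 1 0 :=
          Matrix.det_fin_two _
        rw [htg, hdg] at hlam
        have hMne : A g₀ - lam • 1 ≠ 0 := fun h => hg₀ lam (sub_eq_zero.mp h)
        have hMdet : (A g₀ - lam • 1).det = 0 := by
          rw [Matrix.det_fin_two]
          simp only [Matrix.sub_apply, Matrix.smul_apply, Matrix.one_apply, smul_eq_mul]
          norm_num
          linear_combination hlam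
        obtain ⟨x, hx0, hMx⟩ := exists_kernel_vec2 hMne hMdet
        refine ⟨x, hx0, fun g => ?_⟩
        have hMg : (A g₀ - lam • 1) * A g = A g * (A g₀ - lam • 1) := by
          rw [sub_mul, mul_sub, hcomm g₀ g, smul_mul_assoc, one_mul, mul_smul_comm, mul_one]
        have hker : (A g₀ - lam • 1) *ᵥ (A g *ᵥ x) = 0 := by
          rw [Matrix.mulVec_mulVec, hMg, ← Matrix.mulVec_mulVec, hMx, Matrix.mulVec_zero]
        exact exists_smul_of_cross2_eq_zero hx0 (cross2_eq_zero_of_kernel hMne hMx hker)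

    · -- Case B : some non-semisimple element in H
      push_neg at hsc
      obtain ⟨h₀, hω₀, hns⟩ := hsc
      obtain ⟨χ₀, ht₀⟩ : ∃ c : K, t h₀ = 2 * c := ⟨t h₀ / 2, by field_simp⟩
      have hd₀ : d h₀ = χ₀ ^ 2 := by
        have hk := keyH h₀ hω₀
        rw [ht₀] at hk
        apply mul_left_cancel₀ four_ne
        linear_combination -hk
      have hχ₀ne : χ₀ ≠ 0 := by
        intro h
        exact hd_ne h₀ (by rw [hd₀, h]; ring)
      set N : Matrix (Fin 2) (Fin 2) K := A h₀ - χ₀ • 1 with hNdef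
      have hA₀ : A h₀ = χ₀ • 1 + N := by rw [hNdef]; abel
      have hNne : N ≠ 0 := by
        intro h
        exact hns χ₀ (sub_eq_zero.mp h)
      have htrA₀ : (A h₀).trace = 2 * χ₀ := ht₀
      have hdetA₀ : (A h₀).det = χ₀ ^ 2 := hd₀
      have htrN : N.trace = 0 := by
        rw [hNdef, Matrix.trace_sub, Matrix.trace_smul, Matrix.trace_one, htrA₀]
        simp
        ring
      have hN2 : N * N = 0 := by
        have e : N = (-χ₀) • 1 + A h₀ := by rw [hNdef]; module
        rw [e, expand2, ch2 (A h₀), htrA₀, hdetA₀]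
        module
      have hdetN : N.det = 0 := by
        have hch := ch2 N
        rw [hN2, htrN, zero_smul, zero_sub] at hch
        have h00 := congrFun (congrFun hch 0) 0
        simpa [Matrix.one_apply] using h00
      obtain ⟨x, φ, hx0, hφ0, hNxφ⟩ := rank_one_decomp2 hNne hdetN
      have hφx : φ ⬝ᵥ x = 0 := by rw [← trace_vecMulVec2, ← hNxφ]; exact htrN
      refine ⟨x, hx0, ?_⟩
      intro g
      have hBB' : A g * A g⁻¹ = 1 := hAinv g
      have hB'B : A g⁻¹ * A g = 1 := hAinv' g
      set h₁ : G := g * h₀ * g⁻¹ with hh₁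
      have hωh₁ : w h₁ = 1 := by
        rw [hh₁, hw_mul, hw_mul, hω₀, mul_one]
        have : w g⁻¹ = (w g)⁻¹ := by
          simp [hw, map_inv]
        rw [this, mul_inv_cancel₀ (hw_ne g)]
      set N' : Matrix (Fin 2) (Fin 2) K := A g * N * A g⁻¹ with hN'def
      have hA₁ : A h₁ = χ₀ • 1 + N' := by
        rw [hh₁, hA_mul, hA_mul, hA₀, hN'def]
        rw [mul_add, add_mul, mul_smul_comm, mul_one, smul_mul_assoc, hBB']
      have htrN' : N'.trace = 0 := by
        rw [hN'def, Matrix.trace_mul_comm (A g * N) (A g⁻¹), ← mul_assoc, hB'B, one_mul]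
        exact htrN
      have hd₁ : d h₁ = χ₀ ^ 2 := by
        have e : d h₁ = d g * d h₀ * d g⁻¹ := by rw [hh₁, hd_mul, hd_mul]
        have hdg : d g * d g⁻¹ = 1 := by
          rw [← hd_mul, mul_inv_cancel]
          simp [hd, hA_one]
        rw [e, hd₀, mul_comm (d g) (χ₀ ^ 2), mul_assoc, hdg, mul_one]
      set s : K := (N * N').trace with hsdef
      have ht01 : t (h₀ * h₁) = 2 * χ₀ ^ 2 + s := by
        show (A (h₀ * h₁)).trace = _
        rw [hA_mul, hA₀, hA₁, trace_mix, htrN, htrN']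
        rw [hsdef]
        ring
      have hω01 : w (h₀ * h₁) = 1 := by rw [hw_mul, hω₀, hωh₁, mul_one]
      have hd01 : d (h₀ * h₁) = χ₀ ^ 2 * χ₀ ^ 2 := by rw [hd_mul, hd₀, hd₁]
      have eq1 : (2 * χ₀ ^ 2 + s) ^ 2 = 4 * (χ₀ ^ 2 * χ₀ ^ 2) := by
        have hk := keyH _ hω01
        rw [ht01, hd01] at hk
        exact hk
      have hsq : A h₀ * A h₀ = (χ₀ ^ 2) • (1 : Matrix (Fin 2) (Fin 2) K) + (2 * χ₀) • N := by
        rw [hA₀, expand2, hN2]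
        module
      have ht001 : t (h₀ * (h₀ * h₁)) = 2 * χ₀ ^ 3 + 2 * χ₀ * s := by
        show (A (h₀ * (h₀ * h₁))).trace = _
        rw [hA_mul, hA_mul, ← mul_assoc, hsq, hA₁]
        rw [show ((χ₀ ^ 2) • (1 : Matrix (Fin 2) (Fin 2) K) + (2 * χ₀) • N) * (χ₀ • 1 + N')
            = (χ₀ ^ 3) • (1 : Matrix (Fin 2) (Fin 2) K) + (χ₀ ^ 2) • N' + (2 * χ₀ * χ₀) • N
              + (2 * χ₀) • (N * N') from by rw [expand2, smul_mul_assoc]; module]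
        rw [Matrix.trace_add, Matrix.trace_add, Matrix.trace_add, Matrix.trace_smul,
          Matrix.trace_smul, Matrix.trace_smul, Matrix.trace_smul, Matrix.trace_one,
          htrN, htrN', hsdef]
        simp only [smul_eq_mul, mul_zero, add_zero, mul_one, Fintype.card_fin,
          Nat.cast_ofNat]
        ring
      have hω001 : w (h₀ * (h₀ * h₁)) = 1 := by rw [hw_mul, hω₀, hω01, mul_one]
      have hd001 : d (h₀ * (h₀ * h₁)) = χ₀ ^ 2 * (χ₀ ^ 2 * χ₀ ^ 2) := by
        rw [hd_mul, hd₀, hd01]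
      have eq2 : (2 * χ₀ ^ 3 + 2 * χ₀ * s) ^ 2 = 4 * (χ₀ ^ 2 * (χ₀ ^ 2 * χ₀ ^ 2)) := by
        have hk := keyH _ hω001
        rw [ht001, hd001] at hk
        exact hk
      have hs0 : s = 0 := by
        have e1 : s ^ 2 + 4 * χ₀ ^ 2 * s = 0 := by linear_combination eq1
        have e2 : s ^ 2 + 2 * χ₀ ^ 2 * s = 0 := by
          have h4 : (4 : K) * χ₀ ^ 2 ≠ 0 :=
            mul_ne_zero four_ne (pow_ne_zero _ hχ₀ne)
          apply mul_left_cancel₀ h4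
          linear_combination eq2
        have h20 : 2 * χ₀ ^ 2 * s = 0 := by linear_combination e1 - e2
        exact (mul_eq_zero.mp h20).resolve_left
          (mul_ne_zero two_ne (pow_ne_zero _ hχ₀ne))
      have hfac : (φ ⬝ᵥ (A g *ᵥ x)) * (φ ⬝ᵥ (A g⁻¹ *ᵥ x)) = 0 := by
        rw [← trace_vecMulVec_conj2 x φ (A g) (A g⁻¹), ← hNxφ]
        rw [show N * A g * N * A g⁻¹ = N * (A g * N * A g⁻¹) from by
          rw [mul_assoc, mul_assoc, mul_assoc]]
        rw [← hN'def, ← hsdef]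
        exact hs0
      rcases mul_eq_zero.mp hfac with hzero | hzero
      · obtain ⟨c, hc⟩ := exists_smul_of_cross2_eq_zero hx0
          (cross2_eq_zero_of_dot hφ0 hφx hzero)
        exact ⟨c, hc⟩
      · obtain ⟨c, hc⟩ := exists_smul_of_cross2_eq_zero hx0
          (cross2_eq_zero_of_dot hφ0 hφx hzero)
        have hxc : x = c • (A g *ᵥ x) := by
          calc x = (A g * A g⁻¹) *ᵥ x := by rw [hBB', Matrix.one_mulVec]
          _ = A g *ᵥ (A g⁻¹ *ᵥ x) := by rw [Matrix.mulVec_mulVec]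
          _ = A g *ᵥ (c • x) := by rw [hc]
          _ = c • (A g *ᵥ x) := by rw [Matrix.mulVec_smul]
        have hcne : c ≠ 0 := by
          rintro rfl
          rw [zero_smul] at hxc
          exact hx0 hxc
        refine ⟨c⁻¹, ?_⟩
        conv_rhs => rw [hxc, smul_smul, inv_mul_cancel₀ hcne, one_smul]

  obtain ⟨x, hx0, hx⟩ := part1
  refine ⟨⟨x, hx0, hx⟩, ?_⟩
  -- Part 2 : the character
  have uniq : ∀ {c c' : K}, c • x = c' • x → c = c' := by
    intro c c' h
    have hex : ∃ i, x i ≠ 0 := by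
      by_contra hc; push_neg at hc; exact hx0 (funext fun i => hc i)
    obtain ⟨i, hi⟩ := hex
    have := congrFun h i
    simp only [Pi.smul_apply, smul_eq_mul] at this
    exact mul_right_cancel₀ hi this
  choose χf hχf using hx
  have hχ_mul : ∀ g h : G, χf (g * h) = χf g * χf h := by
    intro g h
    apply uniq
    calc χf (g * h) • x = A (g * h) *ᵥ x := (hχf _).symm
    _ = A g *ᵥ (A h *ᵥ x) := by rw [hA_mul, ← Matrix.mulVec_mulVec]
    _ = (χf g * χf h) • x := by
        rw [hχf h, Matrix.mulVec_smul, hχf g, smul_smul, mul_comm]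
  have hχ_one : χf 1 = 1 := by
    apply uniq
    rw [← hχf 1, hA_one, Matrix.one_mulVec, one_smul]
  have hχne : ∀ g : G, χf g ≠ 0 := by
    intro g h0
    have h1 : χf g * χf g⁻¹ = 1 := by rw [← hχ_mul, mul_inv_cancel, hχ_one]
    rw [h0, zero_mul] at h1
    exact zero_ne_one h1
  have hquad : ∀ g : G, χf g ^ 2 - t g * χf g + d g = 0 := by
    intro g
    have hch := ch2 (A g)
    have happ := congrArg (fun M => M *ᵥ x) hch
    rw [← Matrix.mulVec_mulVec, Matrix.sub_mulVec, Matrix.smul_mulVec,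
      Matrix.smul_mulVec, Matrix.one_mulVec, hχf g, Matrix.mulVec_smul,
      hχf g] at happ
    have happ' : χf g • (χf g • x) = t g • (χf g • x) - d g • x := happ
    have e : (χf g ^ 2 - t g * χf g + d g) • x
        = χf g • (χf g • x) - (t g • (χf g • x) - d g • x) := by module
    have hz : (χf g ^ 2 - t g * χf g + d g) • x = (0 : K) • x := by
      rw [e, happ', zero_smul, sub_self]
    exact uniq hz
  have ht_sum : ∀ g : G, t g = χf g + d g * (χf g)⁻¹ := by
    intro g
    have hq := hquad g
    have h1 : t g * χf g = χf g ^ 2 + d g := by linear_combination -hq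
    field_simp [hχne g]
    linear_combination h1
  have hdisj : ∀ g : G,
      d g * (χf g)⁻¹ = χf g * w g ∨ χf g = d g * (χf g)⁻¹ * w g := by
    intro g
    have hχu : χf g * (χf g)⁻¹ = 1 := mul_inv_cancel₀ (hχne g)
    have hk := key g
    rw [ht_sum g] at hk
    have hfac : (χf g * w g - d g * (χf g)⁻¹) * ((d g * (χf g)⁻¹) * w g - χf g) = 0 := by
      linear_combination -hk + d g * (1 + w g)^2 * hχu
    rcases mul_eq_zero.mp hfac with h | h
    · exact Or.inl (by linear_combination -h)
    · exact Or.inr (by linear_combination -h)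
  have hc2_mul : ∀ g h : G,
      d (g * h) * (χf (g * h))⁻¹ = (d g * (χf g)⁻¹) * (d h * (χf h)⁻¹) := by
    intro g h
    rw [hd_mul, hχ_mul, mul_inv]
    ring
  have hcover : (∀ g : G, d g * (χf g)⁻¹ = χf g * w g) ∨
      (∀ g : G, χf g = d g * (χf g)⁻¹ * w g) := by
    by_contra hcon
    push_neg at hcon
    obtain ⟨⟨a, ha⟩, ⟨b, hb⟩⟩ := hcon
    have hQa : χf a = d a * (χf a)⁻¹ * w a := (hdisj a).resolve_left ha
    have hPb : d b * (χf b)⁻¹ = χf b * w b := (hdisj b).resolve_right hb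
    rcases hdisj (a * b) with h | h
    · apply ha
      rw [hc2_mul, hχ_mul, hw_mul, hPb] at h
      have hcancel : (d a * (χf a)⁻¹) * (χf b * w b) = (χf a * w a) * (χf b * w b) := by
        linear_combination h
      exact mul_right_cancel₀ (mul_ne_zero (hχne b) (hw_ne b)) hcancel
    · apply hb
      rw [hc2_mul, hχ_mul, hw_mul] at h
      have hne : d a * (χf a)⁻¹ * w a ≠ 0 :=
        mul_ne_zero (mul_ne_zero (hd_ne a) (inv_ne_zero (hχne a))) (hw_ne a)
      have hcancel : χf b * (d a * (χf a)⁻¹ * w a)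
          = (d b * (χf b)⁻¹ * w b) * (d a * (χf a)⁻¹ * w a) := by
        linear_combination h - χf b * hQa
      exact mul_right_cancel₀ hne hcancel
  rcases hcover with hP | hQ
  · -- χ = χf
    refine ⟨(⟨⟨χf, hχ_one⟩, hχ_mul⟩ : G →* K).toHomUnits, fun g => ?_⟩
    have hcoe : (((⟨⟨χf, hχ_one⟩, hχ_mul⟩ : G →* K).toHomUnits g : Kˣ) : K) = χf g :=
      MonoidHom.coe_toHomUnits _ _
    rw [hcoe]
    show (A g).charpoly = _
    rw [charpoly_fin2]
    have e1 : (A g).trace = χf g + χf g * w g := by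
      rw [show (A g).trace = t g from rfl, ht_sum g, hP g]
    have e2 : (A g).det = χf g * (χf g * w g) := by
      rw [show (A g).det = d g from rfl, ← hP g]
      rw [mul_comm (d g) ((χf g)⁻¹), ← mul_assoc, mul_inv_cancel₀ (hχne g), one_mul]
    rw [e1, e2, show ((ω g : Kˣ) : K) = w g from rfl]
    simp only [C_add, C_mul]
    ring
  · -- χ = d * χf⁻¹
    have hc2_one : d (1 : G) * (χf (1 : G))⁻¹ = 1 := by
      have hd1 : d (1 : G) = 1 := by simp [hd, hA_one]
      rw [hd1, hχ_one]
      norm_num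
    refine ⟨(⟨⟨fun g => d g * (χf g)⁻¹, hc2_one⟩, fun a b => hc2_mul a b⟩ : G →* K).toHomUnits,
      fun g => ?_⟩
    have hcoe : (((⟨⟨fun g => d g * (χf g)⁻¹, hc2_one⟩, fun a b => hc2_mul a b⟩ :
        G →* K).toHomUnits g : Kˣ) : K) = d g * (χf g)⁻¹ :=
      MonoidHom.coe_toHomUnits _ _
    rw [hcoe]
    show (A g).charpoly = _
    rw [charpoly_fin2]
    have e1 : (A g).trace = d g * (χf g)⁻¹ + d g * (χf g)⁻¹ * w g := by
      rw [show (A g).trace = t g from rfl, ht_sum g]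
      rw [← hQ g]
      ring
    have e2 : (A g).det = d g * (χf g)⁻¹ * (d g * (χf g)⁻¹ * w g) := by
      rw [show (A g).det = d g from rfl, ← hQ g]
      rw [mul_assoc, inv_mul_cancel₀ (hχne g), mul_one]
    rw [e1, e2, show ((ω g : Kˣ) : K) = w g from rfl]
    simp only [C_add, C_mul]
    ring
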